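/- For every multivariate polynomial f ∈ ℚ[X] over a finite parameter set X, there exist rationals A ≥ 0 and B > 0, a simple pMC D over X whose only cycles are self-loops at absorbing states, and a target set T, such that for every valuation val : X → [0,1], the reachability probability of the instantiated chain satisfies Pr_{D[val]}(◇T) = (f(val) + A) / B. -/

import Mathlib

/-- A finite path in state space `S`: a length `m` together with `m + 1` states. -/
abbrev MCPath (S : Type) : Type := Σ m : ℕ, Fin (m + 1) → S

/-- The mass of a path: the product of the transition probabilities along it. -/
def pathMass {S : Type} (P : S → S → ℝ) (π : MCPath S) : ℝ :=
  ∏ i : Fin π.1, P (π.2 i.castSucc) (π.2 i.succ)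

/-- A hitting path from `s` to `T`: it starts in `s`, ends in `T`, and no proper prefix
visits `T`. -/
def IsHitting {S : Type} (T : Set S) (s : S) (π : MCPath S) : Prop :=
  π.2 0 = s ∧ π.2 (Fin.last π.1) ∈ T ∧ ∀ i : Fin π.1, π.2 i.castSucc ∉ T

/-- The reachability probability `Pr_{P,s}(◇T)`: the sum of the masses of all hitting
paths from `s` to `T`. -/
noncomputable def reachProb {S : Type} (P : S → S → ℝ) (T : Set S) (s : S) : ℝ :=
  ∑' π : {π : MCPath S // IsHitting T s π}, pathMass P π.1

/-- An entry of a simple pMC: a nonnegative rational constant, a variable `x`, or `1 - x`. -/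
def SimpleEntry {X : Type} (p : MvPolynomial X ℚ) : Prop :=
  (∃ q : ℚ, 0 ≤ q ∧ p = MvPolynomial.C q) ∨
  (∃ x : X, p = MvPolynomial.X x) ∨
  (∃ x : X, p = 1 - MvPolynomial.X x)

/-- A simple parametric Markov chain over parameter set `X` with `n` states:
all transition polynomials are simple entries and every row sums to `1` as a polynomial. -/
structure SimplePMC (X : Type) (n : ℕ) where
  init : Fin n
  P : Fin n → Fin n → MvPolynomial X ℚ
  simple : ∀ s s', SimpleEntry (P s s')
  rowSum : ∀ s, ∑ s', P s s' = 1

/-- A valuation is well-defined if every parameter value lies in `[0,1]`. -/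
def WDVal {X : Type} (val : X → ℝ) : Prop := ∀ x, val x ∈ Set.Icc (0 : ℝ) 1

/-- A valuation is graph-preserving if every parameter value lies in `(0,1)`. -/
def GPVal {X : Type} (val : X → ℝ) : Prop := ∀ x, val x ∈ Set.Ioo (0 : ℝ) 1

/-- The transition matrix of the instantiation `D[val]`. -/
noncomputable def instP {X : Type} {n : ℕ} (D : SimplePMC X n) (val : X → ℝ) :
    Fin n → Fin n → ℝ :=
  fun s s' => MvPolynomial.aeval val (D.P s s')

/-- The only cycles of the pMC are self-loops at absorbing states. -/
def OnlySelfLoopCycles {X : Type} {n : ℕ} (D : SimplePMC X n) : Prop :=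
  ∀ (l : ℕ) (c : Fin (l + 1) → Fin n), 0 < l →
    (∀ i : Fin l, D.P (c i.castSucc) (c i.succ) ≠ 0) → c (Fin.last l) = c 0 →
    (∀ i, c i = c 0) ∧ D.P (c 0) (c 0) = 1


namespace PMCProof

variable {S : Type}

lemma mcpath_eq {m m' : ℕ} {g : Fin (m+1) → S} {g' : Fin (m'+1) → S}
    (h : m = m') (hg : ∀ i : Fin (m+1), g i = g' (Fin.cast (by omega) i)) :
    (⟨m, g⟩ : MCPath S) = ⟨m', g'⟩ := by
  subst h
  have : g = g' := by
    funext i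
    simpa using hg i
  rw [this]

/-- prepend a state to a path -/
def pathCons (s : S) (π : MCPath S) : MCPath S := ⟨π.1 + 1, Fin.cases s π.2⟩

lemma pathMass_cons (P : S → S → ℝ) (s : S) (π : MCPath S) :
    pathMass P (pathCons s π) = P s (π.2 0) * pathMass P π := by
  unfold pathMass pathCons
  rw [Fin.prod_univ_succ]
  congr 1

lemma isHitting_cons {T : Set S} {s : S} (hs : s ∉ T) (π : MCPath S) (t : S)
    (h : IsHitting T t π) : IsHitting T s (pathCons s π) := by
  obtain ⟨h0, hl, hm⟩ := h
  refine ⟨by simp [pathCons]; rfl, ?_, ?_⟩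
  · show (Fin.cases s π.2 : Fin (π.1+2) → S) (Fin.last (π.1+1)) ∈ T
    rw [← Fin.succ_last]
    exact hl
  · intro i
    induction i using Fin.cases with
    | zero => simpa [pathCons] using hs
    | succ j =>
      show (Fin.cases s π.2 : Fin (π.1+2) → S) j.succ.castSucc ∉ T
      rw [← Fin.succ_castSucc]
      simpa using hm j

end PMCProof
section Gen
namespace PMCProof

variable {S : Type}

lemma path_decomp {m : ℕ} (g : Fin (m+2) → S) :
    (⟨m+1, g⟩ : MCPath S) = pathCons (g 0) ⟨m, fun i => g i.succ⟩ := by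
  unfold pathCons
  apply congrArg
  funext i
  induction i using Fin.cases with
  | zero => simp
  | succ j => simp

lemma isHitting_tail {T : Set S} {s : S} {m : ℕ} {g : Fin (m+2) → S}
    (h : IsHitting T s ⟨m+1, g⟩) :
    IsHitting T (g ((0 : Fin (m+1)).succ)) ⟨m, fun i => g i.succ⟩ := by
  obtain ⟨h0, hl, hm⟩ := h
  refine ⟨rfl, ?_, ?_⟩
  · show g (Fin.last m).succ ∈ T
    rw [Fin.succ_last]
    exact hl
  · intro i
    show g i.castSucc.succ ∉ T
    rw [Fin.succ_castSucc]
    exact hm i.succ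

lemma pathCons_injective (s : S) : Function.Injective (pathCons (S := S) s) := by
  rintro ⟨m, g⟩ ⟨m', g'⟩ h
  have h1 : m + 1 = m' + 1 := congrArg Sigma.fst h
  have hm : m = m' := by omega
  subst hm
  have h2' : (Fin.cases s g : Fin (m+2) → S) = Fin.cases s g' :=
    eq_of_heq (Sigma.mk.inj_iff.mp h).2
  have : g = g' := by
    funext i
    have := congrFun h2' i.succ
    simpa using this
  rw [this]

/-- The one-step unfolding equivalence on hitting paths, for `s ∉ T`. -/
noncomputable def stepEquiv (P : S → S → ℝ) (T : Set S) {s : S} (hs : s ∉ T) :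
    (Σ t : S, {π : MCPath S // IsHitting T t π}) ≃ {π : MCPath S // IsHitting T s π} := by
  apply Equiv.ofBijective (fun x => ⟨pathCons s x.2.1, isHitting_cons hs x.2.1 x.1 x.2.2⟩)
  constructor
  · rintro ⟨t, π, hπ⟩ ⟨t', π', hπ'⟩ hEq
    have h1 : pathCons s π = pathCons s π' := congrArg Subtype.val hEq
    have h2 : π = π' := pathCons_injective s h1
    subst h2
    have : t = t' := by rw [← hπ.1, ← hπ'.1]
    subst this
    rfl
  · rintro ⟨⟨m, g⟩, h⟩
    match m, g, h with
    | 0, g, h =>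
      exfalso
      have h1 : g 0 = s := h.1
      have h2 : g (Fin.last 0) ∈ T := h.2.1
      rw [show Fin.last 0 = 0 from rfl, h1] at h2
      exact hs h2
    | (k+1), g, h =>
      refine ⟨⟨g ((0 : Fin (k+1)).succ), ⟨k, fun i => g i.succ⟩, isHitting_tail h⟩, ?_⟩
      apply Subtype.ext
      show pathCons s ⟨k, fun i => g i.succ⟩ = ⟨k+1, g⟩
      have h1 : g 0 = s := h.1
      rw [path_decomp g, h1]

lemma summable_of_support_finite {β : Type*} {f : β → ℝ}
    (h : (Function.support f).Finite) : Summable f := by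
  classical
  apply summable_of_ne_finset_zero (s := h.toFinset)
  intro b hb
  by_contra hne
  exact hb (h.mem_toFinset.mpr hne)

lemma reachProb_target (P : S → S → ℝ) (T : Set S) (s : S) (hs : s ∈ T) :
    reachProb P T s = 1 := by
  have hpath : IsHitting T s ⟨0, fun _ => s⟩ :=
    ⟨rfl, hs, fun i => i.elim0⟩
  have huniq : ∀ b : {π : MCPath S // IsHitting T s π}, b = ⟨⟨0, fun _ => s⟩, hpath⟩ := by
    rintro ⟨⟨m, g⟩, h⟩
    apply Subtype.ext
    match m, g, h with
    | 0, g, h =>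
      show (⟨0, g⟩ : MCPath S) = ⟨0, fun _ => s⟩
      apply congrArg
      funext i
      have hi : i = 0 := Fin.ext (by omega)
      have h1 : g 0 = s := h.1
      rw [hi, h1]
    | (k+1), g, h =>
      exfalso
      have hmid : g (0 : Fin (k+1)).castSucc ∉ T := h.2.2 0
      have h1 : g 0 = s := h.1
      rw [show (0 : Fin (k+1)).castSucc = 0 from rfl, h1] at hmid
      exact hmid hs
  rw [reachProb]
  rw [tsum_eq_single ⟨⟨0, fun _ => s⟩, hpath⟩ (fun b hb => absurd (huniq b) hb)]
  show pathMass P ⟨0, fun _ => s⟩ = 1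
  unfold pathMass
  simp

lemma pathMass_absorb (P : S → S → ℝ) (T : Set S) (s : S) (hs : s ∉ T)
    (habs : ∀ t, P s t ≠ 0 → t = s) (π : MCPath S) (h : IsHitting T s π) :
    pathMass P π = 0 := by
  by_contra hne
  have hfac : ∀ i : Fin π.1, P (π.2 i.castSucc) (π.2 i.succ) ≠ 0 := by
    intro i
    intro h0
    apply hne
    unfold pathMass
    exact Finset.prod_eq_zero (Finset.mem_univ i) h0
  have hall : ∀ i, π.2 i = s := by
    intro i
    induction i using Fin.induction with
    | zero => exact h.1
    | succ j ih =>
      have := hfac j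
      rw [ih] at this
      exact habs _ this
  have := h.2.1
  rw [hall (Fin.last π.1)] at this
  exact hs this

lemma reachProb_absorb (P : S → S → ℝ) (T : Set S) (s : S) (hs : s ∉ T)
    (habs : ∀ t, P s t ≠ 0 → t = s) : reachProb P T s = 0 := by
  rw [reachProb]
  convert tsum_zero with π
  exact pathMass_absorb P T s hs habs π.1 π.2

lemma hitting_length_le (P : S → S → ℝ) (T : Set S) (rk : S → ℕ)
    (hrk : ∀ s ∉ T, ∀ t, P s t ≠ 0 → rk t < rk s ∨ (t = s ∧ ∀ u, P s u ≠ 0 → u = s)) :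
    ∀ (m : ℕ) (s : S) (π : MCPath S), π.1 = m → IsHitting T s π → pathMass P π ≠ 0 →
      π.1 ≤ rk s := by
  intro m
  induction m with
  | zero => intro s π hm _ _; omega
  | succ k ih =>
    rintro s ⟨m', g⟩ hm h hmass
    simp only at hm
    subst hm
    have hs0 : g 0 = s := h.1
    have hsnT : s ∉ T := by
      have hmid : g (0 : Fin (k+1)).castSucc ∉ T := h.2.2 0
      rw [show ((0 : Fin (k+1)).castSucc) = 0 from rfl, hs0] at hmid
      exact hmid
    have hmass0 := hmass
    rw [path_decomp g] at hmass
    rw [pathMass_cons] at hmass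
    have hP : P (g 0) (g ((0 : Fin (k+1)).succ)) ≠ 0 := fun h0 => hmass (by rw [h0, zero_mul])
    have htail : pathMass P ⟨k, fun i => g i.succ⟩ ≠ 0 := fun h0 => hmass (by rw [h0, mul_zero])
    rw [hs0] at hP
    rcases hrk s hsnT _ hP with hlt | ⟨_, habs⟩
    · have := ih (g ((0 : Fin (k+1)).succ)) ⟨k, fun i => g i.succ⟩ rfl (isHitting_tail h) htail
      simp only at this ⊢
      omega
    · exact absurd (pathMass_absorb P T s hsnT habs ⟨k+1, g⟩ h) hmass0

end PMCProof
end Gen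
namespace PMCProof
section Gen3
variable {S : Type}

lemma support_hitting_finite [Fintype S] (P : S → S → ℝ) (T : Set S) (rk : S → ℕ)
    (hrk : ∀ s ∉ T, ∀ t, P s t ≠ 0 → rk t < rk s ∨ (t = s ∧ ∀ u, P s u ≠ 0 → u = s))
    (s : S) :
    (Function.support fun π : {π : MCPath S // IsHitting T s π} => pathMass P π.1).Finite := by
  classical
  set L := rk s with hL
  have hlen : ∀ x : {π : MCPath S // IsHitting T s π}, pathMass P x.1 ≠ 0 → x.1.1 ≤ L :=
    fun x hx => hitting_length_le P T rk hrk x.1.1 s x.1 rfl x.2 hx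
  rw [← Set.finite_coe_iff]
  let j : (Function.support fun π : {π : MCPath S // IsHitting T s π} => pathMass P π.1) →
      Σ m : Fin (L+1), (Fin (m.1+1) → S) :=
    fun x => ⟨⟨x.1.1.1, by have := hlen x.1 x.2; omega⟩, x.1.1.2⟩
  have hj : Function.Injective j := by
    rintro ⟨⟨⟨m, g⟩, hx⟩, hxs⟩ ⟨⟨⟨m', g'⟩, hy⟩, hys⟩ hEq
    have h1 : m = m' := congrArg (fun z => z.1.1) hEq
    subst h1
    have h2 : g = g' := eq_of_heq (Sigma.mk.inj_iff.mp hEq).2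
    subst h2
    rfl
  exact Finite.of_injective j hj

lemma reachProb_step [Fintype S] (P : S → S → ℝ) (T : Set S) (s : S) (hs : s ∉ T)
    (hfin : ∀ t : S,
      (Function.support fun π : {π : MCPath S // IsHitting T t π} => pathMass P π.1).Finite) :
    reachProb P T s = ∑ t : S, P s t * reachProb P T t := by
  classical
  have h1 : reachProb P T s
      = ∑' x : Σ t : S, {π : MCPath S // IsHitting T t π},
          pathMass P ((stepEquiv P T hs x) : {π : MCPath S // IsHitting T s π}).1 :=
    (Equiv.tsum_eq (stepEquiv P T hs) _).symm
  have h2 : ∀ x : Σ t : S, {π : MCPath S // IsHitting T t π},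
      pathMass P ((stepEquiv P T hs x) : {π : MCPath S // IsHitting T s π}).1
        = P s x.1 * pathMass P x.2.1 := by
    rintro ⟨t, π, hπ⟩
    show pathMass P (pathCons s π) = P s t * pathMass P π
    rw [pathMass_cons, hπ.1]
  rw [h1, tsum_congr h2]
  have hsum : Summable (fun x : Σ t : S, {π : MCPath S // IsHitting T t π} =>
      P s x.1 * pathMass P x.2.1) := by
    apply summable_of_support_finite
    have hsub : (Function.support fun x : Σ t : S, {π : MCPath S // IsHitting T t π} =>
        P s x.1 * pathMass P x.2.1) ⊆
        ⋃ t : S, Sigma.mk t '' (Function.support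
          fun π : {π : MCPath S // IsHitting T t π} => pathMass P π.1) := by
      intro x hx
      have : pathMass P x.2.1 ≠ 0 := by
        intro h0
        apply hx
        show P s x.1 * pathMass P x.2.1 = 0
        rw [h0, mul_zero]
      refine Set.mem_iUnion.mpr ⟨x.1, ⟨x.2, this, ?_⟩⟩
      exact Sigma.eta x
    exact Set.Finite.subset (Set.finite_iUnion fun t => (hfin t).image _) hsub
  rw [hsum.tsum_sigma]
  rw [tsum_fintype]
  apply Finset.sum_congr rfl
  intro t _
  show ∑' (c : { π : MCPath S // IsHitting T t π }), P s t * pathMass P c.1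
      = P s t * reachProb P T t
  rw [tsum_mul_left]
  rfl

lemma pathMass_map {S' : Type} (e : S ≃ S') (P : S → S → ℝ) (π : MCPath S) :
    pathMass (fun a b => P (e.symm a) (e.symm b)) ⟨π.1, fun i => e (π.2 i)⟩ = pathMass P π := by
  unfold pathMass
  apply Finset.prod_congr rfl
  intro i _
  simp

lemma reachProb_equiv {S' : Type} (e : S ≃ S') (P : S → S → ℝ) (T : Set S) (s : S) :
    reachProb (fun a b => P (e.symm a) (e.symm b)) (e.symm ⁻¹' T) (e s) = reachProb P T s := by
  classical
  have hit1 : ∀ π : MCPath S, IsHitting T s π →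
      IsHitting (e.symm ⁻¹' T) (e s) ⟨π.1, fun i => e (π.2 i)⟩ := by
    rintro ⟨m, g⟩ ⟨h0, hl, hm⟩
    have h0' : g 0 = s := h0
    refine ⟨show e (g 0) = e s by rw [h0'], ?_, ?_⟩
    · show e.symm (e (g (Fin.last m))) ∈ T
      simpa using hl
    · intro i
      show e.symm (e (g i.castSucc)) ∉ T
      simpa using hm i
  have hit2 : ∀ π : MCPath S', IsHitting (e.symm ⁻¹' T) (e s) π →
      IsHitting T s ⟨π.1, fun i => e.symm (π.2 i)⟩ := by
    rintro ⟨m, g⟩ ⟨h0, hl, hm⟩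
    have h0' : g 0 = e s := h0
    exact ⟨show e.symm (g 0) = s by rw [h0']; simp, hl, hm⟩
  let Φ : {π : MCPath S // IsHitting T s π} ≃
      {π : MCPath S' // IsHitting (e.symm ⁻¹' T) (e s) π} :=
    { toFun := fun x => ⟨⟨x.1.1, fun i => e (x.1.2 i)⟩, hit1 x.1 x.2⟩
      invFun := fun y => ⟨⟨y.1.1, fun i => e.symm (y.1.2 i)⟩, hit2 y.1 y.2⟩
      left_inv := by
        rintro ⟨⟨m, g⟩, h⟩
        apply Subtype.ext
        show (⟨m, fun i => e.symm (e (g i))⟩ : MCPath S) = ⟨m, g⟩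
        apply congrArg
        funext i
        simp
      right_inv := by
        rintro ⟨⟨m, g⟩, h⟩
        apply Subtype.ext
        show (⟨m, fun i => e (e.symm (g i))⟩ : MCPath S') = ⟨m, g⟩
        apply congrArg
        funext i
        simp }
  rw [reachProb, reachProb, ← Equiv.tsum_eq Φ]
  apply tsum_congr
  intro x
  show pathMass _ (⟨x.1.1, fun i => e (x.1.2 i)⟩ : MCPath S') = pathMass P x.1
  exact pathMass_map e P x.1

end Gen3
end PMCProof
namespace PMCProof
section Constr
open MvPolynomial

variable {V : Type} [DecidableEq V]

noncomputable def Lf (α : V →₀ ℕ) : List V := α.toMultiset.toList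

variable (f : MvPolynomial V ℚ)

noncomputable def Mlen : ℕ := f.support.sup fun α => (Lf α).length

abbrev St := Option ((↥f.support × Fin (Mlen f + 1)) ⊕ Bool)

noncomputable def Bc : ℚ := 1 + ∑ α ∈ f.support, |f.coeff α|
noncomputable def Ac : ℚ := ∑ α ∈ f.support, max 0 (-(f.coeff α))

lemma Bc_pos : 0 < Bc f := by
  have : (0:ℚ) ≤ ∑ α ∈ f.support, |f.coeff α| :=
    Finset.sum_nonneg fun α _ => abs_nonneg _
  unfold Bc; linarith

lemma Ac_nonneg : 0 ≤ Ac f := Finset.sum_nonneg fun α _ => le_max_left _ _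

def good : St f := some (Sum.inr true)
def bad : St f := some (Sum.inr false)
def cell (a : ↥f.support) (i : Fin (Mlen f + 1)) : St f := some (Sum.inl (a, i))

noncomputable def sDst (a : ↥f.support) : St f :=
  if 0 < f.coeff a.1 then good f else bad f
noncomputable def fDst (a : ↥f.support) : St f :=
  if 0 < f.coeff a.1 then bad f else good f

lemma len_le (a : ↥f.support) : (Lf a.1).length ≤ Mlen f := Finset.le_sup (f := fun α => (Lf α).length) a.2

noncomputable def Q : St f → St f → MvPolynomial V ℚ
  | none, t =>
    match t with
    | some (Sum.inr false) => C (1 / Bc f)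
    | some (Sum.inl (a, i)) => if i = (0 : Fin (Mlen f + 1)) then C (|f.coeff a.1| / Bc f) else 0
    | _ => 0
  | some (Sum.inr b), t => if t = some (Sum.inr b) then 1 else 0
  | some (Sum.inl (a, i)), t =>
    if h : i.1 < (Lf a.1).length then
      if t = cell f a ⟨i.1 + 1, by have := len_le f a; omega⟩ then X ((Lf a.1).get ⟨i.1, h⟩)
      else if t = fDst f a then 1 - X ((Lf a.1).get ⟨i.1, h⟩)
      else 0
    else if t = sDst f a then 1 else 0

noncomputable def rkSt : St f → ℕ
  | none => Mlen f + 2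
  | some (Sum.inr _) => 0
  | some (Sum.inl (_, i)) => Mlen f + 1 - i.1

def AbsSt (s : St f) : Prop := ∃ b : Bool, s = some (Sum.inr b)

lemma simpleEntry_C {q : ℚ} (hq : 0 ≤ q) : SimpleEntry (C (σ := V) q) :=
  Or.inl ⟨q, hq, rfl⟩

lemma simpleEntry_zero : SimpleEntry (0 : MvPolynomial V ℚ) :=
  Or.inl ⟨0, le_refl 0, by simp⟩

lemma simpleEntry_one : SimpleEntry (1 : MvPolynomial V ℚ) :=
  Or.inl ⟨1, by norm_num, by simp⟩

lemma Q_simple : ∀ s t, SimpleEntry (Q f s t) := by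
  rintro (_ | (⟨a, i⟩ | b)) t
  · rcases t with _ | (⟨a, i⟩ | b)
    · exact simpleEntry_zero
    · show SimpleEntry (if i = (0 : Fin (Mlen f + 1)) then C (|f.coeff a.1| / Bc f) else 0)
      split_ifs
      · exact simpleEntry_C (div_nonneg (abs_nonneg _) (Bc_pos f).le)
      · exact simpleEntry_zero
    · cases b
      · exact simpleEntry_C (div_nonneg (by norm_num) (Bc_pos f).le)
      · exact simpleEntry_zero
  · show SimpleEntry (if h : i.1 < (Lf a.1).length then _ else _)
    split_ifs with h h1 h2
    · exact Or.inr (Or.inl ⟨_, rfl⟩)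
    · exact Or.inr (Or.inr ⟨_, rfl⟩)
    · exact simpleEntry_zero
    · exact simpleEntry_one
    · exact simpleEntry_zero
  · show SimpleEntry (if t = some (Sum.inr b) then 1 else 0)
    split_ifs
    · exact simpleEntry_one
    · exact simpleEntry_zero

lemma sum_two_point {β M : Type*} [Fintype β] [DecidableEq β] {A B : β}
    (hAB : A ≠ B) [AddCommMonoid M] (p q : β → M) :
    ∑ t, (if t = A then p t else if t = B then q t else 0) = p A + q B := by
  have hpt : ∀ t, (if t = A then p t else if t = B then q t else 0)
      = (if t = A then p t else 0) + (if t = B then q t else 0) := by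
    intro t
    split_ifs with h1 h2 <;> simp_all
  rw [Finset.sum_congr rfl (fun t _ => hpt t), Finset.sum_add_distrib,
    Finset.sum_ite_eq', Finset.sum_ite_eq']
  simp

lemma cell_ne_sDst (a : ↥f.support) (i : Fin (Mlen f + 1)) : cell f a i ≠ sDst f a := by
  unfold cell sDst good bad
  split_ifs <;> simp

lemma cell_ne_fDst (a : ↥f.support) (i : Fin (Mlen f + 1)) : cell f a i ≠ fDst f a := by
  unfold cell fDst good bad
  split_ifs <;> simp

lemma Q_rowSum : ∀ s, ∑ t, Q f s t = 1 := by
  rintro (_ | (⟨a, i⟩ | b))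
  · rw [Fintype.sum_option, Fintype.sum_sum_type, Fintype.sum_prod_type]
    have h1 : Q f none none = 0 := rfl
    have h2 : ∀ a' : ↥f.support, ∀ i' : Fin (Mlen f + 1),
        Q f none (some (Sum.inl (a', i')))
          = if i' = (0 : Fin (Mlen f + 1)) then C (|f.coeff a'.1| / Bc f) else 0 := fun _ _ => rfl
    have h3 : ∑ b : Bool, Q f none (some (Sum.inr b)) = C (1 / Bc f) := by
      rw [Fintype.sum_bool]
      show (0 : MvPolynomial V ℚ) + C (1 / Bc f) = C (1 / Bc f)
      rw [zero_add]
    rw [h1, h3, zero_add]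
    have h4 : ∀ a' : ↥f.support,
        ∑ i' : Fin (Mlen f + 1), Q f none (some (Sum.inl (a', i')))
          = C (|f.coeff a'.1| / Bc f) := by
      intro a'
      rw [Finset.sum_congr rfl (fun i' _ => h2 a' i'), Finset.sum_ite_eq']
      simp
    rw [Finset.sum_congr rfl (fun a' _ => h4 a'), ← map_sum]
    rw [← map_add, ← C_1]
    congr 1
    rw [Finset.sum_coe_sort f.support (fun α => |f.coeff α| / Bc f), ← Finset.sum_div]
    rw [← add_div, Bc]
    rw [add_comm]
    exact div_self (ne_of_gt (Bc_pos f))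
  · show ∑ t, Q f (some (Sum.inl (a, i))) t = 1
    by_cases h : i.1 < (Lf a.1).length
    · have hrow : ∀ t, Q f (some (Sum.inl (a, i))) t
          = if t = cell f a ⟨i.1 + 1, by have := len_le f a; omega⟩
              then X ((Lf a.1).get ⟨i.1, h⟩)
            else if t = fDst f a then 1 - X ((Lf a.1).get ⟨i.1, h⟩)
            else 0 := by
        intro t
        show (if h : i.1 < (Lf a.1).length then _ else _) = _
        rw [dif_pos h]
      rw [Finset.sum_congr rfl (fun t _ => hrow t),
        sum_two_point (by apply Ne.symm; unfold cell fDst good bad; split_ifs <;> simp)]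
      ring
    · have hrow : ∀ t, Q f (some (Sum.inl (a, i))) t = if t = sDst f a then 1 else 0 := by
        intro t
        show (if h : i.1 < (Lf a.1).length then _ else _) = _
        rw [dif_neg h]
      rw [Finset.sum_congr rfl (fun t _ => hrow t), Finset.sum_ite_eq']
      simp
  · show ∑ t, (if t = some (Sum.inr b) then 1 else 0 : MvPolynomial V ℚ) = 1
    rw [Finset.sum_ite_eq']
    simp

lemma Q_absorb : ∀ s, AbsSt f s → ∀ t, Q f s t ≠ 0 → t = s := by
  rintro s ⟨b, rfl⟩ t ht
  by_contra hne
  apply ht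
  show (if t = some (Sum.inr b) then 1 else 0 : MvPolynomial V ℚ) = 0
  rw [if_neg hne]

lemma Q_self : ∀ s, AbsSt f s → Q f s s = 1 := by
  rintro s ⟨b, rfl⟩
  show (if some (Sum.inr b) = some (Sum.inr b) then 1 else 0 : MvPolynomial V ℚ) = 1
  rw [if_pos rfl]

lemma rk_sDst (a : ↥f.support) : rkSt f (sDst f a) = 0 := by
  unfold sDst good bad
  split_ifs <;> rfl

lemma rk_fDst (a : ↥f.support) : rkSt f (fDst f a) = 0 := by
  unfold fDst good bad
  split_ifs <;> rfl

lemma Q_rank : ∀ s, ¬ AbsSt f s → ∀ t, Q f s t ≠ 0 → rkSt f t < rkSt f s := by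
  rintro (_ | (⟨a, i⟩ | b)) habs t ht
  · rcases t with _ | (⟨a', i'⟩ | b')
    · exact absurd rfl ht
    · show rkSt f (some (Sum.inl (a', i'))) < rkSt f none
      show Mlen f + 1 - i'.1 < Mlen f + 2
      omega
    · show 0 < Mlen f + 2
      omega
  · show rkSt f t < Mlen f + 1 - i.1
    by_cases h : i.1 < (Lf a.1).length
    · have hQ : Q f (some (Sum.inl (a, i))) t
          = if t = cell f a ⟨i.1 + 1, by have := len_le f a; omega⟩
              then X ((Lf a.1).get ⟨i.1, h⟩)
            else if t = fDst f a then 1 - X ((Lf a.1).get ⟨i.1, h⟩)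
            else 0 := by
        show (if h : i.1 < (Lf a.1).length then _ else _) = _
        rw [dif_pos h]
      rw [hQ] at ht
      have hlen := len_le f a
      split_ifs at ht with h1 h2
      · rw [h1]
        show Mlen f + 1 - (i.1 + 1) < Mlen f + 1 - i.1
        omega
      · rw [h2, rk_fDst]
        omega
      · exact absurd rfl ht
    · have hQ : Q f (some (Sum.inl (a, i))) t = if t = sDst f a then 1 else 0 := by
        show (if h : i.1 < (Lf a.1).length then _ else _) = _
        rw [dif_neg h]
      rw [hQ] at ht
      have hi := i.2
      split_ifs at ht with h1
      · rw [h1, rk_sDst]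
        omega
      · exact absurd rfl ht
  · exact absurd ⟨b, rfl⟩ habs

lemma Q_cycle : ∀ (l : ℕ) (c : Fin (l + 1) → St f), 0 < l →
    (∀ i : Fin l, Q f (c i.castSucc) (c i.succ) ≠ 0) → c (Fin.last l) = c 0 →
    (∀ i, c i = c 0) ∧ Q f (c 0) (c 0) = 1 := by
  intro l c hl hedge hclose
  by_cases habs : AbsSt f (c 0)
  · have hall : ∀ i, c i = c 0 := by
      intro i
      induction i using Fin.induction with
      | zero => rfl
      | succ j ih =>
        have hj := hedge j
        rw [ih] at hj
        exact Q_absorb f (c 0) habs _ hj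
    exact ⟨hall, Q_self f (c 0) habs⟩
  · exfalso
    have key : ∀ j : Fin (l+1), j.1 = 0 ∨ AbsSt f (c j) ∨ rkSt f (c j) < rkSt f (c 0) := by
      intro j
      induction j using Fin.induction with
      | zero => exact Or.inl rfl
      | succ i ih =>
        rcases ih with h0 | hA | hr
        · have hc0 : c i.castSucc = c 0 := by
            have : i.castSucc = 0 := Fin.ext h0
            rw [this]
          refine Or.inr (Or.inr ?_)
          have hj := hedge i
          rw [hc0] at hj
          exact Q_rank f (c 0) habs _ hj
        · refine Or.inr (Or.inl ?_)
          have heq := Q_absorb f _ hA _ (hedge i)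
          rw [heq]
          exact hA
        · by_cases hA2 : AbsSt f (c i.castSucc)
          · refine Or.inr (Or.inl ?_)
            have heq := Q_absorb f _ hA2 _ (hedge i)
            rw [heq]
            exact hA2
          · exact Or.inr (Or.inr (lt_trans (Q_rank f _ hA2 _ (hedge i)) hr))
    rcases key (Fin.last l) with h0 | hA | hr
    · rw [Fin.val_last] at h0
      omega
    · rw [hclose] at hA
      exact habs hA
    · rw [hclose] at hr
      exact lt_irrefl _ hr

section Values

variable (val : V → ℝ)

/-- The instantiated transition matrix on the nice state space. -/
noncomputable def Pv : St f → St f → ℝ := fun s t => MvPolynomial.aeval val (Q f s t)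

lemma Pv_ne (s t : St f) (h : Pv f val s t ≠ 0) : Q f s t ≠ 0 := by
  intro h0
  apply h
  show MvPolynomial.aeval val (Q f s t) = 0
  rw [h0, map_zero]

lemma good_not_bad : bad f ∉ ({good f} : Set (St f)) := by
  simp [good, bad, Set.mem_singleton_iff]

lemma cell_not_target (a : ↥f.support) (i : Fin (Mlen f + 1)) :
    cell f a i ∉ ({good f} : Set (St f)) := by
  simp [good, cell, Set.mem_singleton_iff]

lemma none_not_target : (none : St f) ∉ ({good f} : Set (St f)) := by
  simp [good, Set.mem_singleton_iff]

lemma Pv_rankCond : ∀ s ∉ ({good f} : Set (St f)), ∀ t, Pv f val s t ≠ 0 →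
    rkSt f t < rkSt f s ∨ (t = s ∧ ∀ u, Pv f val s u ≠ 0 → u = s) := by
  intro s _ t ht
  by_cases habs : AbsSt f s
  · exact Or.inr ⟨Q_absorb f s habs t (Pv_ne f val s t ht),
      fun u hu => Q_absorb f s habs u (Pv_ne f val s u hu)⟩
  · exact Or.inl (Q_rank f s habs t (Pv_ne f val s t ht))

lemma Pv_hitFin : ∀ t : St f,
    (Function.support fun π : {π : MCPath (St f) // IsHitting {good f} t π} =>
      pathMass (Pv f val) π.1).Finite :=
  support_hitting_finite (Pv f val) {good f} (rkSt f) (Pv_rankCond f val)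

lemma reach_good : reachProb (Pv f val) {good f} (good f) = 1 :=
  reachProb_target _ _ _ rfl

lemma reach_bad : reachProb (Pv f val) {good f} (bad f) = 0 :=
  reachProb_absorb _ _ _ (good_not_bad f)
    (fun t ht => Q_absorb f (bad f) ⟨false, rfl⟩ t (Pv_ne f val (bad f) t ht))

lemma reach_cell : ∀ (k : ℕ) (a : ↥f.support) (i : Fin (Mlen f + 1)),
    (Lf a.1).length - i.1 ≤ k →
    reachProb (Pv f val) {good f} (cell f a i)
      = if 0 < f.coeff a.1 then (((Lf a.1).drop i.1).map val).prod
        else 1 - (((Lf a.1).drop i.1).map val).prod := by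
  intro k
  induction k with
  | zero =>
    intro a i hk
    have h : ¬ (i.1 < (Lf a.1).length) := by omega
    rw [reachProb_step (Pv f val) {good f} (cell f a i) (cell_not_target f a i) (Pv_hitFin f val)]
    have hrow : ∀ t, Pv f val (cell f a i) t = if t = sDst f a then 1 else 0 := by
      intro t
      show MvPolynomial.aeval val (if h : i.1 < (Lf a.1).length then _ else _) = _
      rw [dif_neg h]
      split_ifs <;> simp
    have hdrop : (Lf a.1).drop i.1 = [] := List.drop_eq_nil_of_le (by omega)
    rw [hdrop]
    have hsum : ∑ t, Pv f val (cell f a i) t * reachProb (Pv f val) {good f} t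
        = reachProb (Pv f val) {good f} (sDst f a) := by
      rw [Finset.sum_congr rfl (fun t _ => by rw [hrow t, ite_mul, one_mul, zero_mul]),
        Finset.sum_ite_eq']
      simp
    rw [hsum]
    unfold sDst
    split_ifs with hc
    · rw [reach_good]
      simp
    · rw [reach_bad]
      simp
  | succ k ih =>
    intro a i hk
    by_cases h : i.1 < (Lf a.1).length
    · rw [reachProb_step (Pv f val) {good f} (cell f a i) (cell_not_target f a i) (Pv_hitFin f val)]
      set x := (Lf a.1).get ⟨i.1, h⟩ with hx
      have hnext : i.1 + 1 < Mlen f + 1 := by have := len_le f a; omega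
      have hrow : ∀ t, Pv f val (cell f a i) t
          = if t = cell f a ⟨i.1 + 1, hnext⟩ then val x
            else if t = fDst f a then 1 - val x
            else 0 := by
        intro t
        show MvPolynomial.aeval val (if h : i.1 < (Lf a.1).length then _ else _) = _
        rw [dif_pos h]
        split_ifs <;> simp [hx, List.get_eq_getElem]
      have hsum : ∑ t, Pv f val (cell f a i) t * reachProb (Pv f val) {good f} t
          = val x * reachProb (Pv f val) {good f} (cell f a ⟨i.1 + 1, hnext⟩)
            + (1 - val x) * reachProb (Pv f val) {good f} (fDst f a) := by
        rw [Finset.sum_congr rfl (fun t _ => by rw [hrow t, ite_mul, ite_mul, zero_mul]),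
          sum_two_point (Ne.symm (by unfold cell fDst good bad; split_ifs <;> simp))]
      rw [hsum]
      have hIH := ih a ⟨i.1 + 1, hnext⟩ (by simp; omega)
      rw [hIH]
      have hfd : reachProb (Pv f val) {good f} (fDst f a)
          = if 0 < f.coeff a.1 then 0 else 1 := by
        unfold fDst
        split_ifs with hc
        · exact reach_bad f val
        · exact reach_good f val
      rw [hfd]
      have hcons : (Lf a.1).drop i.1 = x :: (Lf a.1).drop (i.1 + 1) := by
        rw [hx, List.get_eq_getElem]
        exact List.drop_eq_getElem_cons h
      rw [hcons, List.map_cons, List.prod_cons]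
      split_ifs with hc
      · ring
      · ring
    · -- same as base case
      rw [reachProb_step (Pv f val) {good f} (cell f a i) (cell_not_target f a i) (Pv_hitFin f val)]
      have hrow : ∀ t, Pv f val (cell f a i) t = if t = sDst f a then 1 else 0 := by
        intro t
        show MvPolynomial.aeval val (if h : i.1 < (Lf a.1).length then _ else _) = _
        rw [dif_neg h]
        split_ifs <;> simp
      have hdrop : (Lf a.1).drop i.1 = [] := List.drop_eq_nil_of_le (by omega)
      rw [hdrop]
      have hsum : ∑ t, Pv f val (cell f a i) t * reachProb (Pv f val) {good f} t
          = reachProb (Pv f val) {good f} (sDst f a) := by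
        rw [Finset.sum_congr rfl (fun t _ => by rw [hrow t, ite_mul, one_mul, zero_mul]),
          Finset.sum_ite_eq']
        simp
      rw [hsum]
      unfold sDst
      split_ifs with hc
      · rw [reach_good]
        simp
      · rw [reach_bad]
        simp

lemma prod_toList_map (α : V →₀ ℕ) : ((Lf α).map val).prod = α.prod fun x k => val x ^ k := by
  have h1 : ((α.toMultiset.toList).map val).prod = (α.toMultiset.map val).prod := by
    rw [← Multiset.prod_coe, ← Multiset.map_coe, Multiset.coe_toList]
  rw [Lf, h1, Finsupp.toMultiset_map, Finsupp.prod_toMultiset,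
    Finsupp.prod_mapDomain_index (fun b => pow_zero b) (fun b m n => pow_add b m n)]

lemma aeval_expand : MvPolynomial.aeval val f
    = ∑ α ∈ f.support, ((f.coeff α : ℚ) : ℝ) * ((Lf α).map val).prod := by
  rw [MvPolynomial.aeval_def, MvPolynomial.eval₂_eq]
  apply Finset.sum_congr rfl
  intro α _
  rw [prod_toList_map]
  rw [show ((f.coeff α : ℚ) : ℝ) = algebraMap ℚ ℝ (f.coeff α) from (eq_ratCast (algebraMap ℚ ℝ) _).symm]
  rfl

lemma reach_init :
    reachProb (Pv f val) {good f} none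
      = (MvPolynomial.aeval val f + (Ac f : ℝ)) / (Bc f : ℝ) := by
  rw [reachProb_step (Pv f val) {good f} none (none_not_target f) (Pv_hitFin f val)]
  rw [Fintype.sum_option, Fintype.sum_sum_type, Fintype.sum_prod_type, Fintype.sum_bool]
  have h1 : Pv f val none none = 0 := by
    show MvPolynomial.aeval val (Q f none none) = 0
    have : Q f none none = 0 := rfl
    rw [this, map_zero]
  have h2 : Pv f val none (some (Sum.inr true)) = 0 := by
    show MvPolynomial.aeval val (Q f none (some (Sum.inr true))) = 0
    have : Q f none (some (Sum.inr true)) = 0 := rfl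
    rw [this, map_zero]
  rw [h1, h2, zero_mul, zero_mul, zero_add, zero_add]
  rw [show (some (Sum.inr false) : St f) = bad f from rfl, reach_bad, mul_zero, add_zero]
  have hrow : ∀ (a : ↥f.support) (i : Fin (Mlen f + 1)),
      Pv f val none (some (Sum.inl (a, i)))
        = if i = (0 : Fin (Mlen f + 1)) then ((|f.coeff a.1| / Bc f : ℚ) : ℝ) else 0 := by
    intro a i
    show MvPolynomial.aeval val
      (if i = (0 : Fin (Mlen f + 1)) then MvPolynomial.C (|f.coeff a.1| / Bc f) else 0) = _
    split_ifs <;> simp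
  have hinner : ∀ a : ↥f.support,
      ∑ i : Fin (Mlen f + 1), Pv f val none (some (Sum.inl (a, i)))
          * reachProb (Pv f val) {good f} (some (Sum.inl (a, i)))
        = ((|f.coeff a.1| / Bc f : ℚ) : ℝ)
            * reachProb (Pv f val) {good f} (cell f a (0 : Fin (Mlen f + 1))) := by
    intro a
    rw [Finset.sum_congr rfl (fun i _ => by rw [hrow a i, ite_mul, zero_mul]),
      Finset.sum_ite_eq']
    simp [cell]
  rw [Finset.sum_congr rfl (fun a _ => hinner a)]
  have hcell0 : ∀ a : ↥f.support,
      reachProb (Pv f val) {good f} (cell f a (0 : Fin (Mlen f + 1)))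
        = if 0 < f.coeff a.1 then ((Lf a.1).map val).prod else 1 - ((Lf a.1).map val).prod := by
    intro a
    have := reach_cell f val (Lf a.1).length a 0 (by simp)
    simpa using this
  rw [Finset.sum_congr rfl (fun a _ => by rw [hcell0 a])]
  have hterm : ∀ α ∈ f.support,
      ((|f.coeff α| / Bc f : ℚ) : ℝ)
          * (if 0 < f.coeff α then ((Lf α).map val).prod else 1 - ((Lf α).map val).prod)
        = (((f.coeff α : ℚ) : ℝ) * ((Lf α).map val).prod + ((max 0 (-(f.coeff α)) : ℚ) : ℝ))
            / (Bc f : ℝ) := by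
    intro α _
    split_ifs with hc
    · rw [abs_of_pos hc, max_eq_left (by linarith)]
      push_cast
      ring
    · rw [abs_of_nonpos (by linarith), max_eq_right (by linarith)]
      push_cast
      ring
  rw [Finset.sum_coe_sort f.support (fun α => ((|f.coeff α| / Bc f : ℚ) : ℝ)
      * (if 0 < f.coeff α then ((Lf α).map val).prod else 1 - ((Lf α).map val).prod))]
  rw [Finset.sum_congr rfl hterm, ← Finset.sum_div, Finset.sum_add_distrib]
  rw [← aeval_expand]
  congr 2
  rw [Ac]
  push_cast
  rfl

end Values

end Constr
end PMCProof
/-- Proposition 8 of the paper (after Chonev): for every `f ∈ ℚ[X]` there are rationals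
`A ≥ 0`, `B > 0` and a simple pMC `D` (whose only cycles are self-loops at absorbing states)
with target set `T` such that `Pr_{D[val]}(◇T) = (f(val) + A) / B` for every well-defined
valuation `val : X → [0,1]`. -/
theorem exists_pmc_solution_function {X : Type} [Fintype X] (f : MvPolynomial X ℚ) :
    ∃ (A B : ℚ), 0 ≤ A ∧ 0 < B ∧
      ∃ (n : ℕ) (D : SimplePMC X n) (T : Set (Fin n)),
        OnlySelfLoopCycles D ∧
        ∀ val : X → ℝ, WDVal val →
          reachProb (instP D val) T D.init = (MvPolynomial.aeval val f + (A : ℝ)) / (B : ℝ) := by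
  letI : DecidableEq X := Classical.decEq X
  refine ⟨PMCProof.Ac f, PMCProof.Bc f, PMCProof.Ac_nonneg f, PMCProof.Bc_pos f, ?_⟩
  let e := Fintype.equivFin (PMCProof.St f)
  refine ⟨Fintype.card (PMCProof.St f),
    ⟨e none, fun i j => PMCProof.Q f (e.symm i) (e.symm j),
      fun s t => PMCProof.Q_simple f _ _, ?_⟩,
    e.symm ⁻¹' {PMCProof.good f}, ?_, ?_⟩
  · intro s
    rw [Equiv.sum_comp e.symm (fun t => PMCProof.Q f (e.symm s) t)]
    exact PMCProof.Q_rowSum f _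
  · intro l c hl hedge hclose
    obtain ⟨hall, hQ⟩ := PMCProof.Q_cycle f l (fun j => e.symm (c j)) hl hedge (show e.symm (c (Fin.last l)) = e.symm (c 0) by rw [hclose])
    exact ⟨fun i => e.symm.injective (hall i), hQ⟩
  · intro val _
    have h1 : reachProb (fun a b => PMCProof.Pv f val (e.symm a) (e.symm b))
          (e.symm ⁻¹' {PMCProof.good f}) (e none)
        = reachProb (PMCProof.Pv f val) {PMCProof.good f} none :=
      PMCProof.reachProb_equiv e (PMCProof.Pv f val) {PMCProof.good f} none
    exact h1.trans (PMCProof.reach_init f val)
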